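/- Let X = (X₁, X₂) with X₁, X₂ independent N(0,1) and Y = 1(X₁ ≥ 0). For the domain D_c (samples (X₁, c·X₂)) and the linear classifier g_w(x) = 1(w₁x₁ + w₂x₂ ≥ 0) with w₁ > 0, the 0-1 risk on D_c equals (1/π)·arctan(|c·w₂/w₁|). -/

import Mathlib

open MeasureTheory ProbabilityTheory Real Set Filter

namespace Stmt12Aux

noncomputable def phi : ℝ → ℝ := gaussianPDFReal 0 1

lemma phi_eq (x : ℝ) : phi x = (Real.sqrt (2 * π))⁻¹ * Real.exp (-x ^ 2 / 2) := by
  simp [phi, gaussianPDFReal]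

lemma phi_nonneg (x : ℝ) : 0 ≤ phi x := gaussianPDFReal_nonneg 0 1 x

lemma phi_cont : Continuous phi := by
  have : phi = fun x => (Real.sqrt (2 * π))⁻¹ * Real.exp (-x ^ 2 / 2) := funext phi_eq
  rw [this]
  exact continuous_const.mul (((continuous_pow 2).neg.div_const 2).rexp)

lemma phi_even (x : ℝ) : phi (-x) = phi x := by simp [phi_eq]

lemma phi_le (x : ℝ) : phi x ≤ (Real.sqrt (2 * π))⁻¹ := by
  rw [phi_eq]
  have h1 : Real.exp (-x ^ 2 / 2) ≤ 1 := by
    rw [Real.exp_le_one_iff]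
    nlinarith [sq_nonneg x]
  calc (Real.sqrt (2 * π))⁻¹ * Real.exp (-x ^ 2 / 2) ≤ (Real.sqrt (2 * π))⁻¹ * 1 := by
        exact mul_le_mul_of_nonneg_left h1 (inv_nonneg.mpr (Real.sqrt_nonneg _))
    _ = (Real.sqrt (2 * π))⁻¹ := mul_one _

lemma phi_integrable : Integrable phi := integrable_gaussianPDFReal 0 1

noncomputable def Phi (t : ℝ) : ℝ := ∫ x in (0:ℝ)..t, phi x

lemma hasDerivAt_Phi (t : ℝ) : HasDerivAt Phi (phi t) t :=
  intervalIntegral.integral_hasDerivAt_right (phi_integrable.intervalIntegrable)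
    (phi_cont.stronglyMeasurableAtFilter _ _) phi_cont.continuousAt

lemma Phi_cont : Continuous Phi := by
  have : Differentiable ℝ Phi := fun t => (hasDerivAt_Phi t).differentiableAt
  exact this.continuous

noncomputable def H (t : ℝ) : ℝ := Phi |t|

lemma H_cont : Continuous H := Phi_cont.comp continuous_abs

lemma H_nonneg (t : ℝ) : 0 ≤ H t :=
  intervalIntegral.integral_nonneg (abs_nonneg t) (fun x _ => phi_nonneg x)

lemma H_le_one (t : ℝ) : H t ≤ 1 := by
  have h1 : H t = ∫ x in Ioc 0 |t|, phi x :=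
    intervalIntegral.integral_of_le (abs_nonneg t)
  rw [h1]
  calc ∫ x in Ioc 0 |t|, phi x ≤ ∫ x, phi x :=
        setIntegral_le_integral phi_integrable (Eventually.of_forall phi_nonneg)
    _ = 1 := integral_gaussianPDFReal_eq_one 0 one_ne_zero


lemma slice_eq (t : ℝ) :
    {x : ℝ | ¬ (0 ≤ x + t ↔ 0 ≤ x)} = Set.Ico (min 0 (-t)) (max 0 (-t)) := by
  ext x
  simp only [mem_setOf_eq, mem_Ico]
  constructor
  · intro h
    by_cases hx : 0 ≤ x
    · have h1 : ¬ (0 ≤ x + t) := fun hxt => h ⟨fun _ => hx, fun _ => hxt⟩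
      push_neg at h1
      exact ⟨min_le_of_left_le hx, lt_max_of_lt_right (by linarith)⟩
    · push_neg at hx
      have h1 : 0 ≤ x + t := by
        by_contra hxt
        exact h ⟨fun c => absurd c hxt, fun c => absurd c (not_le.mpr hx)⟩
      exact ⟨min_le_of_right_le (by linarith), lt_max_of_lt_left hx⟩
  · rintro ⟨h1, h2⟩ h
    rcases lt_or_ge x 0 with hx | hx
    · have hxt : ¬ (0 ≤ x + t) := fun c => absurd (h.mp c) (not_le.mpr hx)
      rcases min_le_iff.mp h1 with h3 | h3
      · linarith
      · exact hxt (by linarith)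
    · have hxt : 0 ≤ x + t := h.mpr hx
      rcases lt_max_iff.mp h2 with h3 | h3
      · linarith
      · linarith

lemma gauss_Ico (u v : ℝ) (h : u ≤ v) :
    gaussianReal 0 1 (Set.Ico u v) = ENNReal.ofReal (∫ x in u..v, phi x) := by
  rw [gaussianReal_apply_eq_integral 0 one_ne_zero]
  congr 1
  rw [MeasureTheory.integral_Ico_eq_integral_Ioo,
    intervalIntegral.integral_of_le h, MeasureTheory.integral_Ioc_eq_integral_Ioo]
  rfl

lemma gauss_slice (t : ℝ) :
    gaussianReal 0 1 {x : ℝ | ¬ (0 ≤ x + t ↔ 0 ≤ x)} = ENNReal.ofReal (H t) := by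
  rw [slice_eq, gauss_Ico _ _ (min_le_max)]
  congr 1
  rcases le_or_gt 0 t with ht | ht
  · have h1 : min 0 (-t) = -t := min_eq_right (by linarith)
    have h2 : max 0 (-t) = 0 := max_eq_left (by linarith)
    rw [h1, h2, H, abs_of_nonneg ht, Phi]
    have := intervalIntegral.integral_comp_neg (a := (0:ℝ)) (b := t) phi
    simp only [phi_even, neg_zero] at this
    rw [this]
  · have h1 : min 0 (-t) = 0 := min_eq_left (by linarith)
    have h2 : max 0 (-t) = -t := max_eq_right (by linarith)
    rw [h1, h2, H, abs_of_neg ht, Phi]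


lemma phi_abs (t : ℝ) : phi |t| = phi t := by
  rcases abs_choice t with h | h
  · rw [h]
  · rw [h, phi_even]

lemma H_zero : H 0 = 0 := by simp [H, Phi]

lemma measurable_S (a : ℝ) :
    MeasurableSet {p : ℝ × ℝ | ¬ (0 ≤ p.1 + a * p.2 ↔ 0 ≤ p.1)} := by
  have h1 : MeasurableSet {p : ℝ × ℝ | 0 ≤ p.1 + a * p.2} :=
    measurableSet_le measurable_const (by fun_prop)
  have h2 : MeasurableSet {p : ℝ × ℝ | 0 ≤ p.1} :=
    measurableSet_le measurable_const (by fun_prop)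
  have hset : {p : ℝ × ℝ | ¬ (0 ≤ p.1 + a * p.2 ↔ 0 ≤ p.1)} =
      ({p : ℝ × ℝ | 0 ≤ p.1 + a * p.2} \ {p : ℝ × ℝ | 0 ≤ p.1}) ∪
        ({p : ℝ × ℝ | 0 ≤ p.1} \ {p : ℝ × ℝ | 0 ≤ p.1 + a * p.2}) := by
    ext p
    simp only [mem_setOf_eq, mem_union, mem_diff, mem_setOf_eq]
    tauto
  rw [hset]
  exact (h1.diff h2).union (h2.diff h1)

lemma integrable_H_mul (a : ℝ) : Integrable (fun y => H (a * y)) (gaussianReal 0 1) := by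
  refine Integrable.mono' (integrable_const 1)
    ((H_cont.comp (continuous_const.mul continuous_id)).aestronglyMeasurable) ?_
  refine Eventually.of_forall fun y => ?_
  rw [Real.norm_eq_abs, abs_of_nonneg (H_nonneg _)]
  exact H_le_one _

noncomputable def G (a : ℝ) : ℝ := ∫ y, H (a * y) ∂(gaussianReal 0 1)

lemma G_nonneg (a : ℝ) : 0 ≤ G a := integral_nonneg fun y => H_nonneg _

lemma G_zero : G 0 = 0 := by simp [G, H_zero]

lemma measure_eq (a : ℝ) :
    ((gaussianReal 0 1).prod (gaussianReal 0 1))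
      {p : ℝ × ℝ | ¬ (0 ≤ p.1 + a * p.2 ↔ 0 ≤ p.1)} = ENNReal.ofReal (G a) := by
  rw [Measure.prod_apply_symm (measurable_S a)]
  have h1 : ∀ y : ℝ, (fun x => (x, y)) ⁻¹' {p : ℝ × ℝ | ¬ (0 ≤ p.1 + a * p.2 ↔ 0 ≤ p.1)}
      = {x : ℝ | ¬ (0 ≤ x + a * y ↔ 0 ≤ x)} := fun y => rfl
  simp_rw [h1, gauss_slice]
  rw [← ofReal_integral_eq_lintegral_ofReal (integrable_H_mul a)
    (Eventually.of_forall fun y => H_nonneg _)]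
  rfl

lemma integral_Ioi_mul_exp {k : ℝ} (hk : 0 < k) :
    ∫ r in Ioi (0:ℝ), r * Real.exp (-k * r ^ 2) = (2 * k)⁻¹ := by
  have hk' : (2:ℝ) * k ≠ 0 := by positivity
  have A : ∀ x : ℝ, HasDerivAt (fun x : ℝ => -(2 * k)⁻¹ * Real.exp (-k * x ^ 2))
      (x * Real.exp (-k * x ^ 2)) x := by
    intro x
    convert (((hasDerivAt_pow 2 x).const_mul (-k)).exp.const_mul (-(2 * k)⁻¹)) using 1
    · rfl
    · rfl
    field_simp
    ring
  have B : Tendsto (fun y : ℝ => -(2 * k)⁻¹ * Real.exp (-k * y ^ 2)) atTop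
      (nhds (-(2 * k)⁻¹ * 0)) := by
    refine Tendsto.const_mul _ ?_
    exact Real.tendsto_exp_atBot.comp
      ((tendsto_pow_atTop two_ne_zero).const_mul_atTop_of_neg (neg_lt_zero.2 hk))
  have key := integral_Ioi_of_hasDerivAt_of_tendsto' (a := (0:ℝ))
    (f := fun x : ℝ => -(2 * k)⁻¹ * Real.exp (-k * x ^ 2)) (fun x _ => A x)
    ((integrable_mul_exp_neg_mul_sq hk).integrableOn) B
  rw [key]
  norm_num [Real.exp_zero]

lemma integral_gauss (g : ℝ → ℝ) :
    ∫ y, g y ∂(gaussianReal 0 1) = ∫ y, phi y * g y := by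
  rw [gaussianReal_of_var_ne_zero 0 one_ne_zero]
  rw [show (gaussianPDF 0 1) = fun x => ((gaussianPDFReal 0 1 x).toNNReal : ENNReal) from rfl]
  rw [integral_withDensity_eq_integral_smul ((measurable_gaussianPDFReal 0 1).real_toNNReal)]
  congr 1
  funext y
  rw [NNReal.smul_def, smul_eq_mul, Real.coe_toNNReal _ (gaussianPDFReal_nonneg 0 1 y)]
  rfl

lemma integrable_abs_gauss : Integrable (fun y : ℝ => |y|) (gaussianReal 0 1) := by
  rw [gaussianReal_of_var_ne_zero 0 one_ne_zero]
  rw [show (gaussianPDF 0 1) = fun x => ((gaussianPDFReal 0 1 x).toNNReal : ENNReal) from rfl]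
  rw [integrable_withDensity_iff_integrable_smul ((measurable_gaussianPDFReal 0 1).real_toNNReal)]
  have heq : (fun y : ℝ => (gaussianPDFReal 0 1 y).toNNReal • |y|)
      = fun y : ℝ => (Real.sqrt (2 * π))⁻¹ * |y * Real.exp (-(1/2 : ℝ) * y ^ 2)| := by
    funext y
    rw [NNReal.smul_def, smul_eq_mul, Real.coe_toNNReal _ (gaussianPDFReal_nonneg 0 1 y), show gaussianPDFReal 0 1 y = phi y from rfl, phi_eq, abs_mul,
      abs_of_pos (Real.exp_pos _)]
    ring_nf
  rw [heq]
  exact ((integrable_mul_exp_neg_mul_sq (by norm_num : (0:ℝ) < 1/2)).abs).const_mul _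

lemma deriv_integral (b : ℝ) :
    ∫ y, |y| * phi (b * y) ∂(gaussianReal 0 1) = 1 / (π * (1 + b ^ 2)) := by
  rw [integral_gauss]
  have hk : 0 < (1 + b ^ 2) / 2 := by positivity
  have hs : (Real.sqrt (2 * π))⁻¹ * (Real.sqrt (2 * π))⁻¹ = (2 * π)⁻¹ := by
    rw [← mul_inv, Real.mul_self_sqrt (by positivity)]
  have h1 : ∀ y : ℝ, phi y * (|y| * phi (b * y))
      = (2 * π)⁻¹ * (|y| * Real.exp (-((1 + b ^ 2) / 2) * y ^ 2)) := by
    intro y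
    have e1 : phi y * phi (b * y) = (2 * π)⁻¹ * Real.exp (-((1 + b ^ 2) / 2) * y ^ 2) := by
      rw [phi_eq, phi_eq, mul_mul_mul_comm, hs, ← Real.exp_add]
      congr 1
      ring
    calc phi y * (|y| * phi (b * y)) = |y| * (phi y * phi (b * y)) := by ring
      _ = (2 * π)⁻¹ * (|y| * Real.exp (-((1 + b ^ 2) / 2) * y ^ 2)) := by rw [e1]; ring
  simp_rw [h1]
  rw [MeasureTheory.integral_const_mul]
  have h2 : ∫ y : ℝ, |y| * Real.exp (-((1 + b ^ 2) / 2) * y ^ 2)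
      = 2 * ∫ y in Ioi (0:ℝ), y * Real.exp (-((1 + b ^ 2) / 2) * y ^ 2) := by
    rw [← integral_comp_abs (f := fun y => y * Real.exp (-((1 + b ^ 2) / 2) * y ^ 2))]
    congr 1
    funext y
    rw [sq_abs]
  rw [h2, integral_Ioi_mul_exp hk]
  have hπ : π ≠ 0 := Real.pi_ne_zero
  have hb2 : (1:ℝ) + b ^ 2 ≠ 0 := by positivity
  field_simp

lemma G_hasDeriv {b : ℝ} (hb : 0 < b) : HasDerivAt G (1 / (π * (1 + b ^ 2))) b := by
  have hmain := hasDerivAt_integral_of_dominated_loc_of_deriv_le (μ := gaussianReal 0 1)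
    (F := fun x y => H (x * y)) (F' := fun x y => |y| * phi (x * y))
    (x₀ := b) (bound := fun y => (Real.sqrt (2 * π))⁻¹ * |y|) (Metric.ball_mem_nhds b (half_pos hb))
    (Eventually.of_forall fun x =>
      (H_cont.comp (continuous_const.mul continuous_id)).aestronglyMeasurable)
    (integrable_H_mul b)
    ((continuous_abs.mul (phi_cont.comp (continuous_const.mul continuous_id))).aestronglyMeasurable)
    ?_ (integrable_abs_gauss.const_mul _) ?_
  · exact hmain.2.congr_deriv (deriv_integral b)
  · refine Eventually.of_forall fun y x _ => ?_
    rw [Real.norm_eq_abs, abs_mul, abs_abs, abs_of_nonneg (phi_nonneg _)]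
    calc |y| * phi (x * y) ≤ |y| * (Real.sqrt (2 * π))⁻¹ :=
          mul_le_mul_of_nonneg_left (phi_le _) (abs_nonneg y)
      _ = (Real.sqrt (2 * π))⁻¹ * |y| := mul_comm _ _
  · refine Eventually.of_forall fun y x hx => ?_
    have hx' : 0 < x := by
      have h := Metric.mem_ball.mp hx
      rw [Real.dist_eq] at h
      have := abs_lt.mp h
      linarith
    rcases eq_or_ne y 0 with rfl | hy
    · simpa using hasDerivAt_const x (H 0)
    · have key : HasDerivAt (fun x' : ℝ => Phi (x' * |y|)) (|y| * phi (x * |y|)) x := by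
        have hc := (hasDerivAt_Phi (x * |y|)).comp x ((hasDerivAt_id x).mul_const |y|)
        convert hc using 1
        · rfl
        · rfl
        · rfl
        · ring
      have key' : HasDerivAt (fun x' : ℝ => Phi (x' * |y|)) (|y| * phi (x * y)) x := by
        convert key using 2
        rw [← phi_abs (x * y), abs_mul, abs_of_pos hx']
      have hEq : (fun x' : ℝ => H (x' * y)) =ᶠ[nhds x] (fun x' : ℝ => Phi (x' * |y|)) := by
        filter_upwards [Ioi_mem_nhds hx'] with z hz
        rw [H, abs_mul, abs_of_pos hz]
      exact key'.congr_of_eventuallyEq hEq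

lemma G_cont : Continuous G := by
  rw [continuous_iff_continuousAt]
  intro x
  refine continuousAt_of_dominated (F := fun x y => H (x * y)) (bound := fun _ => 1)
    (Eventually.of_forall fun x =>
      (H_cont.comp (continuous_const.mul continuous_id)).aestronglyMeasurable)
    (Eventually.of_forall fun x => Eventually.of_forall fun y => ?_)
    (integrable_const 1)
    (Eventually.of_forall fun y =>
      (H_cont.comp (continuous_id.mul continuous_const)).continuousAt)
  rw [Real.norm_eq_abs, abs_of_nonneg (H_nonneg _)]
  exact H_le_one _

lemma G_eq {b : ℝ} (hb : 0 ≤ b) : G b = 1 / π * Real.arctan b := by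
  have hcont : ContinuousOn G (Icc 0 b) := G_cont.continuousOn
  have hderiv : ∀ x ∈ Ioo 0 b, HasDerivWithinAt G (1 / (π * (1 + x ^ 2))) (Ioi x) x :=
    fun x hx => (G_hasDeriv hx.1).hasDerivWithinAt
  have hne : ∀ x : ℝ, π * (1 + x ^ 2) ≠ 0 := fun x => by positivity
  have hint : IntervalIntegrable (fun x : ℝ => 1 / (π * (1 + x ^ 2))) volume 0 b := by
    apply Continuous.intervalIntegrable
    exact continuous_const.div
      (continuous_const.mul (continuous_const.add (continuous_pow 2))) hne
  have hsub := intervalIntegral.integral_eq_sub_of_hasDeriv_right_of_le hb hcont hderiv hint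
  have hval : ∫ y in (0:ℝ)..b, 1 / (π * (1 + y ^ 2)) = 1 / π * Real.arctan b := by
    have h1 : ∀ y : ℝ, 1 / (π * (1 + y ^ 2)) = (1 / π) * (1 / (1 + y ^ 2)) := fun y => by
      rw [one_div_mul_one_div, one_div]
    simp_rw [h1]
    rw [intervalIntegral.integral_const_mul, integral_one_div_one_add_sq, Real.arctan_zero,
      sub_zero]
  rw [hval, G_zero, sub_zero] at hsub
  exact hsub.symm

lemma main (a : ℝ) :
    (((gaussianReal 0 1).prod (gaussianReal 0 1))
      {p : ℝ × ℝ | ¬ (0 ≤ p.1 + a * p.2 ↔ 0 ≤ p.1)}).toReal = 1 / π * Real.arctan |a| := by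
  rw [measure_eq, ENNReal.toReal_ofReal (G_nonneg a)]
  have h : G a = G |a| := by
    refine integral_congr_ae (Eventually.of_forall fun y => ?_)
    simp only [H]
    rw [abs_mul, abs_mul, abs_abs]
  rw [h, G_eq (abs_nonneg a)]

end Stmt12Aux

/-- In the 2D Gaussian toy model with label Y = 1(X₁ ≥ 0), the 0-1 risk on domain
D_c (second coordinate scaled by c) of the linear classifier 1(w₁x₁ + w₂x₂ ≥ 0) with
w₁ > 0 equals (1/π)·arctan|c w₂ / w₁|. -/
theorem stmt_12 (c w₁ w₂ : ℝ) (hw₁ : 0 < w₁) :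
    (((gaussianReal 0 1).prod (gaussianReal 0 1))
        {p : ℝ × ℝ | ¬ ((0 ≤ w₁ * p.1 + w₂ * (c * p.2)) ↔ 0 ≤ p.1)}).toReal =
      (1 / Real.pi) * Real.arctan |c * w₂ / w₁| := by
  have hset : {p : ℝ × ℝ | ¬ ((0 ≤ w₁ * p.1 + w₂ * (c * p.2)) ↔ 0 ≤ p.1)}
      = {p : ℝ × ℝ | ¬ (0 ≤ p.1 + (c * w₂ / w₁) * p.2 ↔ 0 ≤ p.1)} := by
    ext p
    simp only [Set.mem_setOf_eq]
    have heq : w₁ * (p.1 + (c * w₂ / w₁) * p.2) = w₁ * p.1 + w₂ * (c * p.2) := by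
      field_simp
    have hiff : (0 ≤ w₁ * p.1 + w₂ * (c * p.2)) ↔ (0 ≤ p.1 + (c * w₂ / w₁) * p.2) := by
      rw [← heq, mul_nonneg_iff_of_pos_left hw₁]
    rw [hiff]
  rw [hset, Stmt12Aux.main]
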